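/- arXiv:2210.15712 — 2 statements merged into one kernel-verified Lean document; each statement's English description precedes it below -/
import Mathlib

section
/- If |x(0)| ≤ R and x : [0,T] → ℝ^d satisfies the ODE x'(t) = Σ_{j=1}^N a_j(ω_j(t) - x(t))·(ω_j(t) - x(t)), where each a_j : ℝ^d → ℝ is nonnegative and each control ω_j satisfies |ω_j(t)| ≤ R for all t, then |x(t)| ≤ R for all t ∈ [0,T]. -/
open Set MeasureTheory

/-- Invariance of the ball of radius `R` under the judgment dynamics. -/
theorem stmt_0 (d N : ℕ) (T R : ℝ) (hR : 0 < R) (hT : 0 < T)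
    (a : Fin N → EuclideanSpace ℝ (Fin d) → ℝ)
    (ha : ∀ j z, 0 ≤ a j z)
    (ω : Fin N → ℝ → EuclideanSpace ℝ (Fin d))
    (hω : ∀ j t, ‖ω j t‖ ≤ R)
    (x : ℝ → EuclideanSpace ℝ (Fin d))
    (hx : ∀ t ∈ Icc (0:ℝ) T,
      HasDerivAt x (∑ j, a j (ω j t - x t) • (ω j t - x t)) t)
    (hx0 : ‖x 0‖ ≤ R) :
    ∀ t ∈ Icc (0:ℝ) T, ‖x t‖ ≤ R := by
  set v : ℝ → EuclideanSpace ℝ (Fin d) := fun t => ∑ j, a j (ω j t - x t) • (ω j t - x t)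
    with hv_def
  set f : ℝ → ℝ := fun t => ‖x t‖ ^ 2 with hf_def
  -- derivative of f
  have hf' : ∀ t ∈ Icc (0:ℝ) T, HasDerivAt f (2 * inner ℝ (x t) (v t) : ℝ) t := by
    intro t ht
    have h1 := (hx t ht).inner ℝ (hx t ht)
    convert h1 using 1
    · rfl
    · ext s
      simp only [hf_def]
    · ext s
      simp only [hf_def]
      rw [← real_inner_self_eq_norm_sq]
    · show (2 * inner ℝ (x t) (v t) : ℝ) = _
      rw [real_inner_comm (x t) (v t)]
      simp only [hv_def]
      ring
  -- key estimate: when ‖x t‖ ≥ R, 2⟪x, v⟫ ≤ 0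
  have key : ∀ t, R ≤ ‖x t‖ → (2 * inner ℝ (x t) (v t) : ℝ) ≤ 0 := by
    intro t hxt
    have hs : (inner ℝ (x t) (v t) : ℝ) ≤ 0 := by
      have heq : (inner ℝ (x t) (v t) : ℝ)
          = ∑ j, a j (ω j t - x t) * inner ℝ (x t) (ω j t - x t) := by
        simp only [hv_def]
        rw [inner_sum]
        exact Finset.sum_congr rfl fun j _ => real_inner_smul_right _ _ _
      rw [heq]
      apply Finset.sum_nonpos
      intro j _
      have h1 : (inner ℝ (x t) (ω j t - x t) : ℝ) ≤ 0 := by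
        rw [inner_sub_right, real_inner_self_eq_norm_sq]
        have := real_inner_le_norm (x t) (ω j t)
        nlinarith [hω j t, hR.le, norm_nonneg (x t)]
      exact mul_nonpos_of_nonneg_of_nonpos (ha _ _) h1
    linarith
  have hfc : ContinuousOn f (Icc 0 T) := fun t ht =>
    ((hf' t ht).continuousAt.continuousWithinAt).congr (fun _ _ => rfl) rfl
  -- show f t ≤ R^2 + ε * exp t for all ε > 0
  have main : ∀ t ∈ Icc (0:ℝ) T, f t ≤ R ^ 2 := by
    intro t ht
    have hε : ∀ ε : ℝ, 0 < ε → f t ≤ R ^ 2 + ε * Real.exp t := by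
      intro ε hε
      refine image_le_of_deriv_right_lt_deriv_boundary'
        (f' := fun t => 2 * inner ℝ (x t) (v t))
        (B := fun t => R ^ 2 + ε * Real.exp t) (B' := fun t => ε * Real.exp t)
        hfc (fun s hs => (hf' s (Ico_subset_Icc_self hs)).hasDerivWithinAt)
        ?_ ?_ ?_ ?_ ht
      · show ‖x 0‖ ^ 2 ≤ R ^ 2 + ε * Real.exp 0
        rw [Real.exp_zero, mul_one]
        nlinarith [norm_nonneg (x 0)]
      · exact (continuous_const.add (continuous_const.mul Real.continuous_exp)).continuousOn
      · intro s _
        exact ((Real.hasDerivAt_exp s).const_mul ε).hasDerivWithinAt.const_add _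
      · intro s hs hfs
        have hRs : R ≤ ‖x s‖ := by
          have hfs' : R ^ 2 < f s := by
            have hfs2 : f s = R ^ 2 + ε * Real.exp s := hfs
            nlinarith [mul_pos hε (Real.exp_pos s)]
          by_contra h
          push_neg at h
          have : ‖x s‖ ^ 2 < R ^ 2 := by nlinarith [norm_nonneg (x s)]
          have hfseq : f s = ‖x s‖ ^ 2 := rfl
          linarith [hfseq ▸ hfs']
        calc (2 * inner ℝ (x s) (v s) : ℝ) ≤ 0 := key s hRs
          _ < ε * Real.exp s := mul_pos hε (Real.exp_pos s)
    by_contra h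
    push_neg at h
    set ε : ℝ := (f t - R ^ 2) / (2 * Real.exp t) with hε_def
    have hε0 : 0 < ε := div_pos (sub_pos.mpr h) (by positivity)
    have hεt : ε * Real.exp t = (f t - R ^ 2) / 2 := by
      rw [hε_def]
      field_simp
    have := hε ε hε0
    rw [hεt] at this
    linarith
  intro t ht
  have h := main t ht
  have : ‖x t‖ ^ 2 ≤ R ^ 2 := h
  nlinarith [norm_nonneg (x t), hR.le]
end

section
/- Let 𝒜 be a convex subset of a real vector space and J_1, …, J_N : 𝒜 → ℝ convex functionals. If ω* ∈ 𝒜 is Pareto optimal for (J_1, …, J_N), then there exist θ_1, …, θ_N ≥ 0 with Σ_{i=1}^N θ_i = 1 such that ω* minimizes Σ_{i=1}^N θ_i J_i over 𝒜. -/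
/-- Scalarization (converse direction): a Pareto optimum of convex criteria on a convex
set minimizes some convex combination of the criteria. -/
theorem stmt_10 {V : Type*} [AddCommGroup V] [Module ℝ V]
    (N : ℕ) (hN : 1 ≤ N) (𝒜 : Set V) (h𝒜 : Convex ℝ 𝒜)
    (J : Fin N → V → ℝ) (hJ : ∀ i, ConvexOn ℝ 𝒜 (J i))
    (ωstar : V) (hωstar : ωstar ∈ 𝒜)
    (hpareto : ¬ ∃ ω ∈ 𝒜, (∀ i, J i ω ≤ J i ωstar) ∧ (∃ i, J i ω < J i ωstar)) :
    ∃ θ : Fin N → ℝ, (∀ i, 0 ≤ θ i) ∧ (∑ i, θ i = 1) ∧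
      ∀ ω ∈ 𝒜, ∑ i, θ i * J i ωstar ≤ ∑ i, θ i * J i ω := by
  classical
  -- the shifted "image plus nonnegative orthant" set
  set S : Set (Fin N → ℝ) := {x | ∃ ω ∈ 𝒜, ∀ i, J i ω - J i ωstar ≤ x i} with hSdef
  have hSconv : Convex ℝ S := by
    rintro x ⟨ω₁, hω₁, hx⟩ y ⟨ω₂, hω₂, hy⟩ a b ha hb hab
    refine ⟨a • ω₁ + b • ω₂, h𝒜 hω₁ hω₂ ha hb hab, fun i => ?_⟩
    have h1 := (hJ i).2 hω₁ hω₂ ha hb hab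
    have h2 := hx i
    have h3 := hy i
    simp only [Pi.add_apply, Pi.smul_apply, smul_eq_mul] at *
    have e2 : a * J i ω₁ - a * J i ωstar ≤ a * x i := by
      nlinarith [mul_le_mul_of_nonneg_left h2 ha]
    have e3 : b * J i ω₂ - b * J i ωstar ≤ b * y i := by
      nlinarith [mul_le_mul_of_nonneg_left h3 hb]
    have e4 : a * J i ωstar + b * J i ωstar = J i ωstar := by
      rw [← add_mul, hab, one_mul]
    linarith
  -- the open negative orthant
  set s : Set (Fin N → ℝ) := {x | ∀ i, x i < 0} with hsdef
  have hsinter : s = ⋂ i, {x : Fin N → ℝ | x i < 0} := by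
    ext x; simp [hsdef]
  have hsopen : IsOpen s := by
    rw [hsinter]
    exact isOpen_iInter_of_finite fun i =>
      isOpen_lt (continuous_apply i) continuous_const
  have hsconv : Convex ℝ s := by
    rw [hsinter]
    exact convex_iInter fun i =>
      convex_halfSpace_lt ⟨fun _ _ => rfl, fun _ _ => rfl⟩ 0
  have hdisj : Disjoint s S := by
    rw [Set.disjoint_left]
    rintro x hxs ⟨ω, hω, hx⟩
    exact hpareto ⟨ω, hω, fun i => by linarith [hx i, hxs i],
      ⟨⟨0, hN⟩, by linarith [hx ⟨0, hN⟩, hxs ⟨0, hN⟩]⟩⟩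
  obtain ⟨f, u, hfs, hfS⟩ := geometric_hahn_banach_open hsconv hsopen hSconv hdisj
  -- basic facts
  have h0S : (0 : Fin N → ℝ) ∈ S := ⟨ωstar, hωstar, fun i => by simp⟩
  have hu0 : u ≤ 0 := by simpa using hfS 0 h0S
  have hneg1 : (fun _ : Fin N => (-1 : ℝ)) ∈ s := fun i => by norm_num
  have hneg1' : f (fun _ : Fin N => (-1 : ℝ)) < u := hfs _ hneg1
  have hone_eq : (fun _ : Fin N => (-1 : ℝ)) = -(fun _ : Fin N => (1 : ℝ)) := by
    funext j; simp
  have hfone : 0 < f (fun _ : Fin N => (1 : ℝ)) := by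
    have : f (fun _ : Fin N => (-1 : ℝ)) = -f (fun _ : Fin N => (1 : ℝ)) := by
      rw [hone_eq, map_neg]
    linarith
  set fone := f (fun _ : Fin N => (1 : ℝ)) with hfonedef
  -- u ≥ 0
  have hu : 0 ≤ u := by
    by_contra h
    push_neg at h
    set ε := -u / (2 * fone) with hε
    have hεpos : 0 < ε := div_pos (by linarith) (by positivity)
    have hmem : (fun _ : Fin N => -ε) ∈ s := fun i => by simpa using hεpos
    have heq : (fun _ : Fin N => -ε) = (-ε) • (fun _ : Fin N => (1 : ℝ)) := by
      funext j; simp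
    have hval := hfs _ hmem
    rw [heq, map_smul] at hval
    simp only [smul_eq_mul, ← hfonedef] at hval
    have hfone' : fone ≠ 0 := ne_of_gt hfone
    have hhalf : ε * (2 * fone) = -u := by rw [hε]; field_simp
    nlinarith [hval, hhalf]
  -- coordinates of f
  set θ' : Fin N → ℝ := fun i => f (Pi.single i 1) with hθ'def
  have hfx : ∀ x : Fin N → ℝ, f x = ∑ i, x i * θ' i := by
    intro x
    have hx : x = ∑ i, Pi.single i (x i) := (Finset.univ_sum_single x).symm
    conv_lhs => rw [hx, map_sum]
    refine Finset.sum_congr rfl fun i _ => ?_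
    have h5 : Pi.single i (x i) = x i • (Pi.single i (1 : ℝ) : Fin N → ℝ) := by
      rw [← Pi.single_smul, smul_eq_mul, mul_one]
    rw [h5, map_smul, smul_eq_mul]
  have hθ'nonneg : ∀ i, 0 ≤ θ' i := by
    intro i
    by_contra h
    push_neg at h
    set c := f (fun _ : Fin N => (-1 : ℝ)) with hcdef
    have hcu : c < u := hneg1'
    set t := (u - c + 1) / (-θ' i) with ht
    have htpos : 0 < t := div_pos (by linarith) (by linarith)
    have hmem : ((fun _ : Fin N => (-1 : ℝ)) - t • (Pi.single i (1 : ℝ) : Fin N → ℝ)) ∈ s := by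
      intro j
      have h01 : (0 : ℝ) ≤ (Pi.single i (1 : ℝ) : Fin N → ℝ) j := by
        rw [Pi.single_apply]; split <;> norm_num
      simp only [Pi.sub_apply, Pi.smul_apply, smul_eq_mul]
      nlinarith [mul_nonneg htpos.le h01]
    have hval := hfs _ hmem
    rw [map_sub, map_smul] at hval
    simp only [smul_eq_mul] at hval
    have hmul : t * (-θ' i) = u - c + 1 :=
      div_mul_cancel₀ _ (by linarith : -θ' i ≠ 0)
    have : c - t * θ' i = u + 1 := by nlinarith [hmul]
    have hθi : θ' i = f (Pi.single i 1) := rfl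
    rw [← hθi] at hval
    linarith
  have hsum : ∑ i, θ' i = fone := by
    rw [hfonedef, hfx]
    simp
  -- the final convex combination
  refine ⟨fun i => θ' i / fone, fun i => div_nonneg (hθ'nonneg i) hfone.le, ?_, ?_⟩
  · rw [← Finset.sum_div, hsum, div_self (ne_of_gt hfone)]
  · intro ω hω
    have hxS : (fun i => J i ω - J i ωstar) ∈ S := ⟨ω, hω, fun i => le_rfl⟩
    have h1 : 0 ≤ ∑ i, (J i ω - J i ωstar) * θ' i := by
      have := hfS _ hxS
      rw [hfx] at this
      linarith
    have h2 : ∑ i, (θ' i / fone) * J i ω - ∑ i, (θ' i / fone) * J i ωstar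
        = (∑ i, (J i ω - J i ωstar) * θ' i) / fone := by
      rw [← Finset.sum_sub_distrib, Finset.sum_div]
      refine Finset.sum_congr rfl fun i _ => ?_
      field_simp
    have h3 : 0 ≤ (∑ i, (J i ω - J i ωstar) * θ' i) / fone :=
      div_nonneg h1 hfone.le
    linarith
end
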